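/- For any two distinct flippable pairs (x,y) and (x',y'), the corresponding 6-cycles C_6(x,y)∘0 and C_6(x',y')∘0 in the middle levels graph G_n are edge-disjoint. -/
import Mathlib


/-- A Dyck word: equally many ones (`true`) and zeros (`false`), and
every prefix has at least as many ones as zeros. -/
def IsDyck (x : List Bool) : Prop :=
  x.count true = x.count false ∧
  ∀ k : ℕ, (x.take k).count false ≤ (x.take k).count true

/-- `DyckN n` is the set of Dyck words of length `2n`. -/
def DyckN (n : ℕ) : Set (List Bool) :=
  {x | x.length = 2 * n ∧ IsDyck x}

/-- `(x,y)` is a flippable pair: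
`x = (1,u_1,1,u_2,…,1,u_d,1,1,0,w,0,v_d,0,…,v_1,0,v_0)` and
`y = (1,u_1,1,u_2,…,1,u_d,1,0,1,w,0,v_d,0,…,v_1,0,v_0)` for some `d ≥ 0` and
Dyck words `u_1,…,u_d,v_0,…,v_d,w`.  Here `us = [u_1,…,u_d]` and
`vs = [v_d,…,v_1]` (in order of appearance). -/
def Flippable (x y : List Bool) : Prop :=
  ∃ (us vs : List (List Bool)) (w v0 : List Bool),
    us.length = vs.length ∧
    (∀ u ∈ us, IsDyck u) ∧ (∀ v ∈ vs, IsDyck v) ∧ IsDyck w ∧ IsDyck v0 ∧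
    x = (us.map (fun u => true :: u)).flatten ++ [true, true, false] ++ w ++
        [false] ++ (vs.map (fun v => v ++ [false])).flatten ++ v0 ∧
    y = (us.map (fun u => true :: u)).flatten ++ [true, false, true] ++ w ++
        [false] ++ (vs.map (fun v => v ++ [false])).flatten ++ v0

/-- A substitution for the three stars: any of the six `{0,1}`-combinations
using each symbol at least once. -/
def Admissible (s : Bool × Bool × Bool) : Prop :=
  s ≠ (false, false, false) ∧ s ≠ (true, true, true)

/-- Substitute the three stars of the string `(pre, *, *, w, *, post)`. -/
def fillStars (pre w post : List Bool) (s : Bool × Bool × Bool) : List Bool :=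
  pre ++ s.1 :: s.2.1 :: (w ++ s.2.2 :: post)

/-- Two star substitutions differing in exactly one of the three symbols. -/
def StarAdj (s t : Bool × Bool × Bool) : Prop :=
  (s.1 ≠ t.1 ∧ s.2.1 = t.2.1 ∧ s.2.2 = t.2.2) ∨
  (s.1 = t.1 ∧ s.2.1 ≠ t.2.1 ∧ s.2.2 = t.2.2) ∨
  (s.1 = t.1 ∧ s.2.1 = t.2.1 ∧ s.2.2 ≠ t.2.2)

/-- The edge set of the 6-cycle encoded by the string `(pre, *, *, w, *, post)`. -/
def C6EdgeSet (pre w post : List Bool) : Set (Sym2 (List Bool)) :=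
  {e | ∃ s t, Admissible s ∧ Admissible t ∧ StarAdj s t ∧
    e = s(fillStars pre w post s, fillStars pre w post t)}

/-- `FlipData x y E` : `(x,y)` is a flippable pair and `E` is the edge set of
the associated 6-cycle `C_6(x,y)∘0`, encoded by the star string
`(u_1,0,…,u_d,0,1,*,*,w,*,v_d,1,…,v_1,1,v_0,0)`. -/
def FlipData (x y : List Bool) (E : Set (Sym2 (List Bool))) : Prop :=
  ∃ (us vs : List (List Bool)) (w v0 : List Bool),
    us.length = vs.length ∧
    (∀ u ∈ us, IsDyck u) ∧ (∀ v ∈ vs, IsDyck v) ∧ IsDyck w ∧ IsDyck v0 ∧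
    x = (us.map (fun u => true :: u)).flatten ++ [true, true, false] ++ w ++
        [false] ++ (vs.map (fun v => v ++ [false])).flatten ++ v0 ∧
    y = (us.map (fun u => true :: u)).flatten ++ [true, false, true] ++ w ++
        [false] ++ (vs.map (fun v => v ++ [false])).flatten ++ v0 ∧
    E = C6EdgeSet ((us.map (fun u => u ++ [false])).flatten ++ [true]) w
        ((vs.map (fun v => v ++ [true])).flatten ++ v0 ++ [false])

namespace SixCyc

def ht (l : List Bool) : ℤ := (l.count true : ℤ) - (l.count false : ℤ)

lemma ht_nil : ht [] = 0 := by simp [ht]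

lemma ht_append (a b : List Bool) : ht (a ++ b) = ht a + ht b := by
  simp [ht, List.count_append]; ring

lemma ht_take_append (a b : List Bool) (k : ℕ) :
    ht ((a ++ b).take k) = ht (a.take k) + ht (b.take (k - a.length)) := by
  rw [List.take_append, ht_append]

lemma ht_cons (b : Bool) (l : List Bool) :
    ht (b :: l) = (if b then 1 else -1) + ht l := by
  cases b <;> simp [ht, List.count_cons] <;> ring

lemma dyck_ht {a : List Bool} (h : IsDyck a) : ht a = 0 := by
  simp [ht, h.1]

lemma dyck_take {a : List Bool} (h : IsDyck a) (k : ℕ) : 0 ≤ ht (a.take k) := by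
  have := h.2 k; unfold ht; omega

lemma ht_single (b : Bool) (k : ℕ) :
    ht ([b].take k) = if k = 0 then 0 else if b then 1 else -1 := by
  cases k with
  | zero => simp [ht]
  | succ n => cases b <;> simp [ht]

/-- `v_d 1 v_{d-1} 1 … v_1 1 v_0 0` -/
def mk (vs : List (List Bool)) (v0 : List Bool) : List Bool :=
  (vs.map (fun v => v ++ [true])).flatten ++ v0 ++ [false]

/-- `u_1 0 u_2 0 … u_d 0` -/
def flatF (us : List (List Bool)) : List Bool :=
  (us.map (fun u => u ++ [false])).flatten

lemma mk_nil (v0 : List Bool) : mk [] v0 = v0 ++ [false] := by simp [mk]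

lemma mk_cons (v : List Bool) (r : List (List Bool)) (v0 : List Bool) :
    mk (v :: r) v0 = v ++ [true] ++ mk r v0 := by simp [mk]

lemma flatF_nil : flatF [] = [] := by simp [flatF]

lemma flatF_cons (u : List Bool) (r : List (List Bool)) :
    flatF (u :: r) = u ++ [false] ++ flatF r := by simp [flatF]

lemma mk_ht (vs : List (List Bool)) (v0 : List Bool)
    (hv : ∀ v ∈ vs, IsDyck v) (h0 : IsDyck v0) :
    ht (mk vs v0) = (vs.length : ℤ) - 1 := by
  induction vs with
  | nil =>
    have := dyck_ht h0
    simp [mk_nil, ht_append, ht] at *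
    omega
  | cons v r ih =>
    rw [mk_cons, ht_append, ht_append, dyck_ht (hv v (by simp)),
      ih (fun v hv' => hv v (by simp [hv']))]
    simp [ht]
    try ring
    try omega

lemma flatF_ht (us : List (List Bool)) (hu : ∀ u ∈ us, IsDyck u) :
    ht (flatF us) = -(us.length : ℤ) := by
  induction us with
  | nil => simp [flatF_nil, ht_nil]
  | cons u r ih =>
    rw [flatF_cons, ht_append, ht_append, dyck_ht (hu u (by simp)),
      ih (fun v hv' => hu v (by simp [hv']))]
    simp [ht]
    try ring
    try omega

lemma mk_lb1 (vs : List (List Bool)) (v0 : List Bool)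
    (hv : ∀ v ∈ vs, IsDyck v) (h0 : IsDyck v0) (k : ℕ) :
    -1 ≤ ht ((mk vs v0).take k) := by
  induction vs generalizing k with
  | nil =>
    rw [mk_nil, ht_take_append, ht_single]
    have := dyck_take h0 k
    split <;> simp <;> omega
  | cons v r ih =>
    rw [mk_cons, ht_take_append, ht_take_append, ht_single]
    have h1 := dyck_take (hv v (by simp)) k
    have h2 := ih (fun v hv' => hv v (by simp [hv'])) (k - (v.length + 1))
    rcases le_or_gt k v.length with h | h
    · have e1 : k - v.length = 0 := by omega
      have e2 : k - (v.length + 1) = 0 := by omega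
      simp [e1, e2, ht_nil]
      omega
    · have e1 : ¬ (k - v.length = 0) := by omega
      simp [e1]
      omega

lemma mk_lb0 (vs : List (List Bool)) (v0 : List Bool)
    (hv : ∀ v ∈ vs, IsDyck v) (h0 : IsDyck v0) (k : ℕ) (hk : k < (mk vs v0).length) :
    0 ≤ ht ((mk vs v0).take k) := by
  cases vs with
  | nil =>
    rw [mk_nil] at hk ⊢
    simp at hk
    rw [ht_take_append, ht_single]
    have h1 := dyck_take h0 k
    have h2 : k - v0.length = 0 := by omega
    simp [h2]
    omega
  | cons v r =>
    rw [mk_cons, ht_take_append, ht_take_append, ht_single]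
    have h1 := dyck_take (hv v (by simp)) k
    have h2 := mk_lb1 r v0 (fun v hv' => hv v (by simp [hv'])) h0 (k - (v.length + 1))
    rcases le_or_gt k v.length with h | h
    · have e1 : k - v.length = 0 := by omega
      have e2 : k - (v.length + 1) = 0 := by omega
      simp [e1, e2, ht_nil]
      omega
    · have e1 : ¬ (k - v.length = 0) := by omega
      simp [e1]
      omega

lemma flatF_lb (us : List (List Bool)) (hu : ∀ u ∈ us, IsDyck u) (k : ℕ)
    (hk : k < (flatF us).length) :
    -(us.length : ℤ) < ht ((flatF us).take k) := by
  induction us generalizing k with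
  | nil => simp [flatF_nil] at hk
  | cons u r ih =>
    rw [flatF_cons, List.length_append, List.length_append] at hk
    rw [flatF_cons, ht_take_append, ht_take_append, ht_single]
    have h1 := dyck_take (hu u (by simp)) k
    rcases le_or_gt k u.length with h | h
    · have e1 : k - u.length = 0 := by omega
      have e2 : k - (u.length + 1) = 0 := by omega
      simp [e1, e2, ht_nil]
      omega
    · have e1 : ¬ (k - u.length = 0) := by omega
      simp [e1]
      rcases Nat.eq_or_lt_of_le (Nat.succ_le_of_lt h) with h' | h'
      · -- k = u.length + 1 : the r-part take is 0
        have e2 : k - (u.length + 1) = 0 := by omega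
        have hrne : r ≠ [] := by
          intro he; subst he; simp [flatF_nil] at hk; omega
        have : 1 ≤ r.length := by
          cases r with
          | nil => exact absurd rfl hrne
          | cons a b => simp
        simp [e2, ht_nil]
        push_cast
        omega
      · have h2 := ih (fun v hv' => hu v (by simp [hv'])) (k - (u.length + 1))
          (by simp at hk ⊢; omega)
        push_cast
        omega

/-- lower bound `≥ 0` for `w ++ 1 :: mk vs v0` prefixes -/
lemma seg1_lb (w : List Bool) (vs : List (List Bool)) (v0 : List Bool)
    (hw : IsDyck w) (hv : ∀ v ∈ vs, IsDyck v) (h0 : IsDyck v0) (m : ℕ) :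
    0 ≤ ht ((w ++ true :: mk vs v0).take m) := by
  have e : w ++ true :: mk vs v0 = w ++ [true] ++ mk vs v0 := by simp
  rw [e, ht_take_append, ht_take_append, ht_single]
  have h1 := dyck_take hw m
  have h2 := mk_lb1 vs v0 hv h0 (m - (w.length + 1))
  rcases le_or_gt m w.length with h | h
  · have e1 : m - w.length = 0 := by omega
    have e2 : m - (w.length + 1) = 0 := by omega
    simp [e1, e2, ht_nil]; omega
  · have e1 : ¬ (m - w.length = 0) := by omega
    simp [e1]; omega

/-- lower bound `≥ -2` for `w ++ 0 :: mk vs v0` prefixes -/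
lemma seg0_lb (w : List Bool) (vs : List (List Bool)) (v0 : List Bool)
    (hw : IsDyck w) (hv : ∀ v ∈ vs, IsDyck v) (h0 : IsDyck v0) (m : ℕ) :
    -2 ≤ ht ((w ++ false :: mk vs v0).take m) := by
  have e : w ++ false :: mk vs v0 = w ++ [false] ++ mk vs v0 := by simp
  rw [e, ht_take_append, ht_take_append, ht_single]
  have h1 := dyck_take hw m
  have h2 := mk_lb1 vs v0 hv h0 (m - (w.length + 1))
  rcases le_or_gt m w.length with h | h
  · have e1 : m - w.length = 0 := by omega
    have e2 : m - (w.length + 1) = 0 := by omega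
    simp [e1, e2, ht_nil]; omega
  · have e1 : ¬ (m - w.length = 0) := by omega
    simp [e1]; omega

def Wt2 (σ : Bool × Bool × Bool) : Prop :=
  σ = (true, true, false) ∨ σ = (true, false, true) ∨ σ = (false, true, true)

def tailOf (σ : Bool × Bool × Bool) (w : List Bool) (vs : List (List Bool))
    (v0 : List Bool) : List Bool :=
  σ.1 :: σ.2.1 :: (w ++ σ.2.2 :: mk vs v0)

lemma tail_lb (σ : Bool × Bool × Bool) (w : List Bool) (vs : List (List Bool))
    (v0 : List Bool) (hσ : Wt2 σ)
    (hw : IsDyck w) (hv : ∀ v ∈ vs, IsDyck v) (h0 : IsDyck v0) (m : ℕ) :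
    -1 ≤ ht ((tailOf σ w vs v0).take m) := by
  match m with
  | 0 => simp [ht_nil]
  | 1 =>
    rcases hσ with h | h | h <;> subst h <;> simp [tailOf, ht, List.count_cons]
  | (n+2) =>
    rcases hσ with h | h | h <;> subst h <;>
      rw [tailOf, List.take_succ_cons, List.take_succ_cons, ht_cons, ht_cons]
    · have h2 := seg0_lb w vs v0 hw hv h0 n
      simp only [if_true]
      omega
    · have h2 := seg1_lb w vs v0 hw hv h0 n
      norm_num
      omega
    · have h2 := seg1_lb w vs v0 hw hv h0 n
      norm_num
      omega


lemma take_prefix_of_append (a r : List Bool) (b : Bool) :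
    (a ++ b :: r).take (a.length + 1) = a ++ [b] := by
  have e : a ++ b :: r = (a ++ [b]) ++ r := by simp
  rw [e, List.take_append_of_le_length (by simp), List.take_of_length_le (by simp)]

lemma split_false_aux (a a' r r' : List Bool)
    (ha : a.count true = a.count false) (ha' : IsDyck a')
    (h : a ++ false :: r = a' ++ false :: r') : a'.length ≤ a.length := by
  by_contra hlt
  push_neg at hlt
  have h1 : (a ++ false :: r).take (a.length + 1) = a ++ [false] :=
    take_prefix_of_append a r false
  have h2 : (a' ++ false :: r').take (a.length + 1) = a'.take (a.length + 1) :=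
    List.take_append_of_le_length (by omega)
  have h3 : a'.take (a.length + 1) = a ++ [false] := by rw [← h2, ← h, h1]
  have h4 := ha'.2 (a.length + 1)
  rw [h3] at h4
  simp [List.count_append] at h4
  omega

lemma split_false (a a' r r' : List Bool)
    (ha : IsDyck a) (ha' : IsDyck a')
    (h : a ++ false :: r = a' ++ false :: r') : a = a' ∧ r = r' := by
  have h1 := split_false_aux a a' r r' ha.1 ha' h
  have h2 := split_false_aux a' a r' r ha'.1 ha h.symm
  have h3 := List.append_inj h (by omega)
  exact ⟨h3.1, by simpa using h3.2⟩

lemma split_true_aux (a a' r r' : List Bool)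
    (ha : a.count true = a.count false) (ha' : a'.count true = a'.count false)
    (hr : ∀ k, k < r.length → 0 ≤ ht (r.take k))
    (h : a ++ true :: r = a' ++ true :: r') : a'.length ≤ a.length := by
  by_contra hlt
  push_neg at hlt
  have h1 : (a ++ true :: r).take (a.length + 1) = a ++ [true] :=
    take_prefix_of_append a r true
  have h2 : (a' ++ true :: r').take (a.length + 1) = a'.take (a.length + 1) :=
    List.take_append_of_le_length (by omega)
  have h3 : a'.take (a.length + 1) = a ++ [true] := by rw [← h2, ← h, h1]
  -- m := the rest of a'
  set m := a'.drop (a.length + 1) with hm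
  have h4 : a' = (a ++ [true]) ++ m := by
    rw [← h3, hm, List.take_append_drop]
  have h5 : r = m ++ true :: r' := by
    rw [h4] at h
    exact (by simpa using h.symm : m ++ true :: r' = r).symm
  have hhtm : ht m = -1 := by
    have e1 : ht a' = 0 := by simp [ht, ha']
    have e2 : ht a = 0 := by simp [ht, ha]
    rw [h4, ht_append, ht_append] at e1
    simp [ht] at e1 ⊢
    omega
  have hlen : m.length < r.length := by rw [h5]; simp
  have hx := hr m.length hlen
  rw [h5, List.take_append_of_le_length (le_refl _), List.take_of_length_le (le_refl _)] at hx
  omega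

lemma split_true (a a' r r' : List Bool)
    (ha : IsDyck a) (ha' : IsDyck a')
    (hr : ∀ k, k < r.length → 0 ≤ ht (r.take k))
    (hr' : ∀ k, k < r'.length → 0 ≤ ht (r'.take k))
    (h : a ++ true :: r = a' ++ true :: r') : a = a' ∧ r = r' := by
  have h1 := split_true_aux a a' r r' ha.1 ha'.1 hr h
  have h2 := split_true_aux a' a r' r ha'.1 ha.1 hr' h.symm
  have h3 := List.append_inj h (by omega)
  exact ⟨h3.1, by simpa using h3.2⟩

lemma flatF_inj (us us' : List (List Bool))
    (hu : ∀ u ∈ us, IsDyck u) (hu' : ∀ u ∈ us', IsDyck u)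
    (h : flatF us = flatF us') : us = us' := by
  induction us generalizing us' with
  | nil =>
    cases us' with
    | nil => rfl
    | cons u' r' =>
      rw [flatF_nil, flatF_cons] at h
      exact absurd h.symm (by simp)
  | cons u r ih =>
    cases us' with
    | nil =>
      rw [flatF_nil, flatF_cons] at h
      exact absurd h (by simp)
    | cons u' r' =>
      rw [flatF_cons, flatF_cons] at h
      have h' : u ++ false :: flatF r = u' ++ false :: flatF r' := by simpa using h
      obtain ⟨e1, e2⟩ := split_false u u' _ _ (hu u (by simp)) (hu' u' (by simp)) h'
      rw [e1, ih r' (fun v hv' => hu v (by simp [hv'])) (fun v hv' => hu' v (by simp [hv'])) e2]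

lemma mk_inj (vs vs' : List (List Bool)) (v0 v0' : List Bool)
    (hv : ∀ v ∈ vs, IsDyck v) (hv' : ∀ v ∈ vs', IsDyck v)
    (h0 : IsDyck v0) (h0' : IsDyck v0')
    (h : mk vs v0 = mk vs' v0') : vs = vs' ∧ v0 = v0' := by
  induction vs generalizing vs' with
  | nil =>
    cases vs' with
    | nil =>
      rw [mk_nil, mk_nil] at h
      exact ⟨rfl, (List.append_inj' h rfl).1⟩
    | cons v' r' =>
      exfalso
      have e1 := mk_ht [] v0 hv h0
      have e2 := mk_ht (v' :: r') v0' hv' h0'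
      rw [h, e2] at e1
      simp at e1
  | cons v r ih =>
    cases vs' with
    | nil =>
      exfalso
      have e1 := mk_ht (v :: r) v0 hv h0
      have e2 := mk_ht [] v0' hv' h0'
      rw [h, e2] at e1
      simp at e1
    | cons v' r' =>
      rw [mk_cons, mk_cons] at h
      have h' : v ++ true :: mk r v0 = v' ++ true :: mk r' v0' := by simpa using h
      obtain ⟨e1, e2⟩ := split_true v v' _ _ (hv v (by simp)) (hv' v' (by simp))
        (fun k hk => mk_lb0 r v0 (fun x hx => hv x (by simp [hx])) h0 k hk)
        (fun k hk => mk_lb0 r' v0' (fun x hx => hv' x (by simp [hx])) h0' k hk) h'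
      obtain ⟨e3, e4⟩ := ih r' (fun x hx => hv x (by simp [hx]))
        (fun x hx => hv' x (by simp [hx])) e2
      exact ⟨by rw [e1, e3], e4⟩


lemma fill_eq (us : List (List Bool)) (w : List Bool) (vs : List (List Bool))
    (v0 : List Bool) (σ : Bool × Bool × Bool) :
    fillStars (flatF us ++ [true]) w (mk vs v0) σ
      = flatF us ++ true :: tailOf σ w vs v0 := by
  simp [fillStars, tailOf]

lemma flatF_lb' (us : List (List Bool)) (hu : ∀ u ∈ us, IsDyck u) (k : ℕ) :
    -(us.length : ℤ) ≤ ht ((flatF us).take k) := by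
  rcases lt_or_ge k (flatF us).length with h | h
  · exact le_of_lt (flatF_lb us hu k h)
  · rw [List.take_of_length_le h, flatF_ht us hu]

lemma z_lb (us : List (List Bool)) (w : List Bool) (vs : List (List Bool))
    (v0 : List Bool) (σ : Bool × Bool × Bool)
    (hu : ∀ u ∈ us, IsDyck u) (hw : IsDyck w) (hv : ∀ v ∈ vs, IsDyck v)
    (h0 : IsDyck v0) (hσ : Wt2 σ) (k : ℕ) :
    -(us.length : ℤ) ≤ ht ((flatF us ++ true :: tailOf σ w vs v0).take k) := by
  have e : flatF us ++ true :: tailOf σ w vs v0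
      = flatF us ++ ([true] ++ tailOf σ w vs v0) := by simp
  rw [e, ht_take_append, ht_take_append, ht_single]
  have h1 := flatF_lb' us hu k
  have h2 := tail_lb σ w vs v0 hσ hw hv h0 (k - (flatF us).length - 1)
  by_cases hc : k - (flatF us).length = 0
  · simp [hc, ht_nil]
    omega
  · have h3 : (flatF us).length ≤ k := by omega
    rw [List.take_of_length_le h3, flatF_ht us hu]
    simp [hc]
    omega

lemma z_at (us : List (List Bool)) (X : List Bool) (hu : ∀ u ∈ us, IsDyck u) :
    ht ((flatF us ++ X).take (flatF us).length) = -(us.length : ℤ) := by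
  rw [List.take_left, flatF_ht us hu]

lemma z_strict (us : List (List Bool)) (X : List Bool) (hu : ∀ u ∈ us, IsDyck u)
    (k : ℕ) (hk : k < (flatF us).length) :
    -(us.length : ℤ) < ht ((flatF us ++ X).take k) := by
  rw [List.take_append_of_le_length (le_of_lt hk)]
  exact flatF_lb us hu k hk

lemma reconstruct (us us' vs vs' : List (List Bool)) (w w' v0 v0' : List Bool)
    (σ σ' : Bool × Bool × Bool)
    (hu : ∀ u ∈ us, IsDyck u) (hv : ∀ v ∈ vs, IsDyck v) (hw : IsDyck w)
    (h0 : IsDyck v0)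
    (hu' : ∀ u ∈ us', IsDyck u) (hv' : ∀ v ∈ vs', IsDyck v) (hw' : IsDyck w')
    (h0' : IsDyck v0') (hσ : Wt2 σ) (hσ' : Wt2 σ')
    (heq : flatF us ++ true :: tailOf σ w vs v0
         = flatF us' ++ true :: tailOf σ' w' vs' v0') :
    us = us' ∧ w = w' ∧ vs = vs' ∧ v0 = v0' := by
  have a1 : ht ((flatF us ++ true :: tailOf σ w vs v0).take (flatF us).length)
      = -(us.length : ℤ) := z_at us _ hu
  have a1' : ht ((flatF us ++ true :: tailOf σ w vs v0).take (flatF us').length)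
      = -(us'.length : ℤ) := by rw [heq]; exact z_at us' _ hu'
  have b1 : -(us'.length : ℤ) ≤ -(us.length : ℤ) := by
    rw [← a1]
    rw [heq]
    exact z_lb us' w' vs' v0' σ' hu' hw' hv' h0' hσ' _
  have b1' : -(us.length : ℤ) ≤ -(us'.length : ℤ) := by
    rw [← a1']
    exact z_lb us w vs v0 σ hu hw hv h0 hσ _
  have hd : (us.length : ℤ) = us'.length := by omega
  have hflen : (flatF us).length = (flatF us').length := by
    rcases lt_trichotomy (flatF us).length (flatF us').length with hlt | he | hgt
    · exfalso
      have := z_strict us' (true :: tailOf σ' w' vs' v0') hu' _ hlt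
      rw [← heq, a1, hd] at this
      omega
    · exact he
    · exfalso
      have := z_strict us (true :: tailOf σ w vs v0) hu _ hgt
      rw [a1'] at this
      omega
  obtain ⟨hF, hT⟩ := List.append_inj heq hflen
  have husq : us = us' := flatF_inj us us' hu hu' hF
  have hT' : tailOf σ w vs v0 = tailOf σ' w' vs' v0' := by
    simpa using hT
  unfold tailOf at hT'
  have hσ1 : σ.1 = σ'.1 := by
    have := congrArg (fun l => l.headI) hT'
    simpa using this
  -- get the rest
  have hT2 : σ.2.1 :: (w ++ σ.2.2 :: mk vs v0)
      = σ'.2.1 :: (w' ++ σ'.2.2 :: mk vs' v0') := by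
    have := congrArg List.tail hT'
    simpa using this
  have hσ2 : σ.2.1 = σ'.2.1 := by
    have := congrArg (fun l => l.headI) hT2
    simpa using this
  have hT3 : w ++ σ.2.2 :: mk vs v0 = w' ++ σ'.2.2 :: mk vs' v0' := by
    have := congrArg List.tail hT2
    simpa using this
  have hσq : σ = σ' := by
    rcases hσ with h | h | h <;> rcases hσ' with h' | h' | h' <;>
      subst h <;> subst h' <;> simp_all
  subst hσq
  have hwmk : w = w' ∧ mk vs v0 = mk vs' v0' := by
    rcases hσ with h | h | h <;> subst h <;> simp only at hT3
    · exact split_false w w' _ _ hw hw' hT3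
    · exact split_true w w' _ _ hw hw'
        (fun k hk => mk_lb0 vs v0 hv h0 k hk)
        (fun k hk => mk_lb0 vs' v0' hv' h0' k hk) hT3
    · exact split_true w w' _ _ hw hw'
        (fun k hk => mk_lb0 vs v0 hv h0 k hk)
        (fun k hk => mk_lb0 vs' v0' hv' h0' k hk) hT3
  obtain ⟨hwq, hmk⟩ := hwmk
  obtain ⟨hvq, h0q⟩ := mk_inj vs vs' v0 v0' hv hv' h0 h0' hmk
  exact ⟨husq, hwq, hvq, h0q⟩

instance (s : Bool × Bool × Bool) : Decidable (Admissible s) := by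
  unfold Admissible; infer_instance

instance (s t : Bool × Bool × Bool) : Decidable (StarAdj s t) := by
  unfold StarAdj; infer_instance

instance (s : Bool × Bool × Bool) : Decidable (Wt2 s) := by
  unfold Wt2; infer_instance

def wt (σ : Bool × Bool × Bool) : ℕ :=
  (cond σ.1 1 0) + (cond σ.2.1 1 0) + (cond σ.2.2 1 0)

lemma count_fill (pre w post : List Bool) (s : Bool × Bool × Bool) :
    (fillStars pre w post s).count true
      = pre.count true + w.count true + post.count true + wt s := by
  rcases s with ⟨a, b, c⟩
  cases a <;> cases b <;> cases c <;>
    simp [fillStars, wt, List.count_append, List.count_cons] <;> omega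

end SixCyc


/-- For any two distinct flippable pairs `(x,y)` and `(x',y')` of Dyck words in
`D_n`, the corresponding 6-cycles `C_6(x,y)∘0` and `C_6(x',y')∘0` are
edge-disjoint. -/
theorem sixCycles_edge_disjoint (n : ℕ) (x y x' y' : List Bool)
    (E E' : Set (Sym2 (List Bool)))
    (hx : x ∈ DyckN n) (hy : y ∈ DyckN n) (hx' : x' ∈ DyckN n)
    (hy' : y' ∈ DyckN n)
    (h : FlipData x y E) (h' : FlipData x' y' E')
    (hne : (x, y) ≠ (x', y')) :
    Disjoint E E' := by
  rw [Set.disjoint_left]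
  intro e heE heE'
  obtain ⟨us, vs, w, v0, hlen, hus, hvs, hw, hv0, hxe, hye, hEe⟩ := h
  obtain ⟨us', vs', w', v0', hlen', hus', hvs', hw', hv0', hxe', hye', hEe'⟩ := h'
  rw [hEe] at heE
  rw [hEe'] at heE'
  obtain ⟨s, t, hs, ht_, hadj, he⟩ := heE
  obtain ⟨s', t', hs', ht', hadj', he'⟩ := heE'
  rw [he, Sym2.eq_iff] at he'
  -- notation
  have main : ∀ (σ σ' : Bool × Bool × Bool), SixCyc.Wt2 σ → SixCyc.Wt2 σ' →
      fillStars ((us.map (fun u => u ++ [false])).flatten ++ [true]) w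
        ((vs.map (fun v => v ++ [true])).flatten ++ v0 ++ [false]) σ =
      fillStars ((us'.map (fun u => u ++ [false])).flatten ++ [true]) w'
        ((vs'.map (fun v => v ++ [true])).flatten ++ v0' ++ [false]) σ' → False := by
    intro σ σ' hσ hσ' heq
    have heq2 : SixCyc.flatF us ++ true :: SixCyc.tailOf σ w vs v0
        = SixCyc.flatF us' ++ true :: SixCyc.tailOf σ' w' vs' v0' := by
      rw [← SixCyc.fill_eq, ← SixCyc.fill_eq]
      exact heq
    obtain ⟨e1, e2, e3, e4⟩ := SixCyc.reconstruct us us' vs vs' w w' v0 v0' σ σ'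
      hus hvs hw hv0 hus' hvs' hw' hv0' hσ hσ' heq2
    exact hne (by rw [hxe, hye, hxe', hye', e1, e2, e3, e4])
  have fact1 : ∀ s t : Bool × Bool × Bool, Admissible s → Admissible t → StarAdj s t →
      (SixCyc.wt s = 2 ∧ SixCyc.wt t = 1) ∨ (SixCyc.wt s = 1 ∧ SixCyc.wt t = 2) := by
    decide
  have fact2 : ∀ s : Bool × Bool × Bool, SixCyc.wt s = 2 → SixCyc.Wt2 s := by decide
  rcases fact1 s t hs ht_ hadj with ⟨w1, w2⟩ | ⟨w1, w2⟩ <;>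
    rcases fact1 s' t' hs' ht' hadj' with ⟨w1', w2'⟩ | ⟨w1', w2'⟩ <;>
    rcases he' with ⟨ha, hb⟩ | ⟨ha, hb⟩ <;>
    [skip; skip; skip; skip; skip; skip; skip; skip] <;>
    first
    | exact main s s' (fact2 s w1) (fact2 s' w1') ha
    | exact main s t' (fact2 s w1) (fact2 t' w2') ha
    | exact main t s' (fact2 t w2) (fact2 s' w1') hb
    | exact main t t' (fact2 t w2) (fact2 t' w2') hb
    | (exfalso
       have c1 := congrArg (List.count true) ha
       have c2 := congrArg (List.count true) hb
       rw [SixCyc.count_fill, SixCyc.count_fill] at c1 c2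
       omega)
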